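/- If dim V ≥ 4, then G(V) contains an induced cycle of length 5: there exist five pairwise distinct nontrivial proper subspaces W₁, W₂, W₃, W₄, W₅ of V such that Wᵢ + Wᵢ₊₁ = V for i = 1,2,3,4, W₅ + W₁ = V, and all other pairs Wᵢ, Wⱼ satisfy Wᵢ + Wⱼ ≠ V; consequently G(V) is not perfect. -/

import Mathlib

open Module

/-- The subspace sum graph of a vector space `V` over a field `K`. -/
def subspaceSumGraph (K V : Type*) [Field K] [AddCommGroup V] [Module K V] :
    SimpleGraph {W : Submodule K V // W ≠ ⊥ ∧ W ≠ ⊤} where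
  Adj W₁ W₂ := W₁ ≠ W₂ ∧ (W₁ : Submodule K V) ⊔ (W₂ : Submodule K V) = ⊤
  symm := by
    constructor
    intro a b h
    exact ⟨h.1.symm, by rw [sup_comm]; exact h.2⟩
  loopless := by
    constructor
    intro a h
    exact h.1 rfl

/-- The clique number of a graph, as an extended natural number: the supremum of the
sizes of its cliques. -/
noncomputable def cliqueNumE {α : Type*} (G : SimpleGraph α) : ℕ∞ :=
  sSup ((fun m : ℕ => (m : ℕ∞)) '' {m | ∃ s : Finset α, G.IsNClique m s})

/-- A graph is perfect if for every induced subgraph the chromatic number equals the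
clique number. -/
def SimpleGraph.IsPerfect {α : Type*} (G : SimpleGraph α) : Prop :=
  ∀ s : Set α, (G.induce s).chromaticNumber = cliqueNumE (G.induce s)

set_option maxHeartbeats 4000000 in
/-- If `dim V ≥ 4`, then `G(V)` contains an induced cycle of length `5`: five pairwise
distinct nontrivial proper subspaces, consecutive ones (cyclically) summing to `V` and
non-consecutive ones not summing to `V`; consequently `G(V)` is not perfect. -/
theorem not_perfect_of_dim_ge_four (K V : Type*) [Field K] [AddCommGroup V]
    [Module K V] [FiniteDimensional K V] (hdim : 4 ≤ finrank K V) :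
    (∃ W₁ W₂ W₃ W₄ W₅ : Submodule K V,
      (W₁ ≠ ⊥ ∧ W₁ ≠ ⊤) ∧ (W₂ ≠ ⊥ ∧ W₂ ≠ ⊤) ∧ (W₃ ≠ ⊥ ∧ W₃ ≠ ⊤) ∧
      (W₄ ≠ ⊥ ∧ W₄ ≠ ⊤) ∧ (W₅ ≠ ⊥ ∧ W₅ ≠ ⊤) ∧
      W₁ ≠ W₂ ∧ W₁ ≠ W₃ ∧ W₁ ≠ W₄ ∧ W₁ ≠ W₅ ∧ W₂ ≠ W₃ ∧ W₂ ≠ W₄ ∧ W₂ ≠ W₅ ∧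
      W₃ ≠ W₄ ∧ W₃ ≠ W₅ ∧ W₄ ≠ W₅ ∧
      W₁ ⊔ W₂ = ⊤ ∧ W₂ ⊔ W₃ = ⊤ ∧ W₃ ⊔ W₄ = ⊤ ∧ W₄ ⊔ W₅ = ⊤ ∧ W₅ ⊔ W₁ = ⊤ ∧
      W₁ ⊔ W₃ ≠ ⊤ ∧ W₁ ⊔ W₄ ≠ ⊤ ∧ W₂ ⊔ W₄ ≠ ⊤ ∧ W₂ ⊔ W₅ ≠ ⊤ ∧ W₃ ⊔ W₅ ≠ ⊤) ∧
    ¬ (subspaceSumGraph K V).IsPerfect := by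
  classical
  set b : Basis (Fin (finrank K V)) K V := Module.finBasis K V with hbdef
  obtain ⟨i0, hi0⟩ : ∃ i : Fin (finrank K V), i.1 = 0 := ⟨⟨0, by omega⟩, rfl⟩
  obtain ⟨i1, hi1⟩ : ∃ i : Fin (finrank K V), i.1 = 1 := ⟨⟨1, by omega⟩, rfl⟩
  obtain ⟨i2, hi2⟩ : ∃ i : Fin (finrank K V), i.1 = 2 := ⟨⟨2, by omega⟩, rfl⟩
  obtain ⟨i3, hi3⟩ : ∃ i : Fin (finrank K V), i.1 = 3 := ⟨⟨3, by omega⟩, rfl⟩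
  set R : Submodule K V :=
    Submodule.span K {v | ∃ i : Fin (finrank K V), 4 ≤ i.1 ∧ v = b i} with hRdef
  set W1 : Submodule K V := Submodule.span K {b i0, b i1} ⊔ R with hW1def
  set W2 : Submodule K V := Submodule.span K {b i2, b i3} ⊔ R with hW2def
  set W3 : Submodule K V := Submodule.span K {b i0 + b i2, b i1 - b i2} ⊔ R with hW3def
  set W4 : Submodule K V := Submodule.span K {b i1, b i3} ⊔ R with hW4def
  set W5 : Submodule K V := Submodule.span K {b i0 + b i2, b i3 - b i0} ⊔ R with hW5def
  -- coordinate computations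
  have hcoord : ∀ i j : Fin (finrank K V), b.coord j (b i) = if i = j then 1 else 0 := by
    intro i j
    simp [Basis.coord_apply, Basis.repr_self, Finsupp.single_apply]
  have hcne : ∀ i j : Fin (finrank K V), i.1 ≠ j.1 → b.coord j (b i) = 0 := by
    intro i j h
    rw [hcoord, if_neg (by simpa [Fin.ext_iff] using h)]
  have hceq : ∀ i : Fin (finrank K V), b.coord i (b i) = 1 := by
    intro i
    rw [hcoord, if_pos rfl]
  -- membership of generators
  have memL : ∀ x y : V, x ∈ Submodule.span K {x, y} :=
    fun x y => Submodule.subset_span (Set.mem_insert _ _)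
  have memR : ∀ x y : V, y ∈ Submodule.span K {x, y} :=
    fun x y => Submodule.subset_span (Set.mem_insert_of_mem _ rfl)
  -- sup = ⊤ helper
  have htop : ∀ W : Submodule K V, b i0 ∈ W → b i1 ∈ W → b i2 ∈ W → b i3 ∈ W →
      R ≤ W → W = ⊤ := by
    intro W h0 h1 h2 h3 hR
    rw [eq_top_iff, ← b.span_eq, Submodule.span_le]
    rintro v ⟨i, rfl⟩
    rcases lt_or_ge i.1 4 with hi | hi
    · have : i = i0 ∨ i = i1 ∨ i = i2 ∨ i = i3 := by
        simp only [Fin.ext_iff, hi0, hi1, hi2, hi3]; omega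
      rcases this with rfl | rfl | rfl | rfl <;> assumption
    · exact hR (Submodule.subset_span ⟨i, hi, rfl⟩)
  -- ≤ ker helper
  have hker : ∀ (φ : V →ₗ[K] K) (x y : V), φ x = 0 → φ y = 0 →
      (∀ i : Fin (finrank K V), 4 ≤ i.1 → φ (b i) = 0) →
      Submodule.span K {x, y} ⊔ R ≤ LinearMap.ker φ := by
    intro φ x y hx hy hR4
    refine sup_le ?_ ?_
    · rw [Submodule.span_le]
      rintro v hv
      rcases hv with rfl | hv
      · exact hx
      · rcases hv with rfl
        exact hy
    · rw [hRdef, Submodule.span_le]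
      rintro v ⟨i, hi, rfl⟩
      exact hR4 i hi
  have hne_top : ∀ (φ : V →ₗ[K] K) (j : Fin (finrank K V)) (U : Submodule K V),
      U ≤ LinearMap.ker φ → φ (b j) = 1 → U ≠ ⊤ := by
    intro φ j U hle h1 htop'
    have : b j ∈ LinearMap.ker φ := hle (htop' ▸ Submodule.mem_top)
    rw [LinearMap.mem_ker, h1] at this
    exact one_ne_zero this
  -- the five consecutive sups are ⊤
  have hsup12 : W1 ⊔ W2 = ⊤ := by
    refine htop _ ?_ ?_ ?_ ?_ ?_
    · exact Submodule.mem_sup_left (Submodule.mem_sup_left (memL _ _))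
    · exact Submodule.mem_sup_left (Submodule.mem_sup_left (memR _ _))
    · exact Submodule.mem_sup_right (Submodule.mem_sup_left (memL _ _))
    · exact Submodule.mem_sup_right (Submodule.mem_sup_left (memR _ _))
    · exact le_sup_of_le_left le_sup_right
  have hsup23 : W2 ⊔ W3 = ⊤ := by
    have h2 : b i2 ∈ W2 ⊔ W3 := Submodule.mem_sup_left (Submodule.mem_sup_left (memL _ _))
    have h3 : b i3 ∈ W2 ⊔ W3 := Submodule.mem_sup_left (Submodule.mem_sup_left (memR _ _))
    have h02 : b i0 + b i2 ∈ W2 ⊔ W3 :=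
      Submodule.mem_sup_right (Submodule.mem_sup_left (memL _ _))
    have h12 : b i1 - b i2 ∈ W2 ⊔ W3 :=
      Submodule.mem_sup_right (Submodule.mem_sup_left (memR _ _))
    refine htop _ ?_ ?_ h2 h3 (le_sup_of_le_left le_sup_right)
    · simpa using sub_mem h02 h2
    · simpa using add_mem h12 h2
  have hsup34 : W3 ⊔ W4 = ⊤ := by
    have h1 : b i1 ∈ W3 ⊔ W4 := Submodule.mem_sup_right (Submodule.mem_sup_left (memL _ _))
    have h3 : b i3 ∈ W3 ⊔ W4 := Submodule.mem_sup_right (Submodule.mem_sup_left (memR _ _))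
    have h02 : b i0 + b i2 ∈ W3 ⊔ W4 :=
      Submodule.mem_sup_left (Submodule.mem_sup_left (memL _ _))
    have h12 : b i1 - b i2 ∈ W3 ⊔ W4 :=
      Submodule.mem_sup_left (Submodule.mem_sup_left (memR _ _))
    have h2 : b i2 ∈ W3 ⊔ W4 := by simpa using sub_mem h1 h12
    refine htop _ ?_ h1 h2 h3 (le_sup_of_le_left le_sup_right)
    · simpa using sub_mem h02 h2
  have hsup45 : W4 ⊔ W5 = ⊤ := by
    have h1 : b i1 ∈ W4 ⊔ W5 := Submodule.mem_sup_left (Submodule.mem_sup_left (memL _ _))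
    have h3 : b i3 ∈ W4 ⊔ W5 := Submodule.mem_sup_left (Submodule.mem_sup_left (memR _ _))
    have h02 : b i0 + b i2 ∈ W4 ⊔ W5 :=
      Submodule.mem_sup_right (Submodule.mem_sup_left (memL _ _))
    have h30 : b i3 - b i0 ∈ W4 ⊔ W5 :=
      Submodule.mem_sup_right (Submodule.mem_sup_left (memR _ _))
    have h0 : b i0 ∈ W4 ⊔ W5 := by simpa using sub_mem h3 h30
    refine htop _ h0 h1 ?_ h3 (le_sup_of_le_left le_sup_right)
    · simpa using sub_mem h02 h0
  have hsup51 : W5 ⊔ W1 = ⊤ := by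
    have h0 : b i0 ∈ W5 ⊔ W1 := Submodule.mem_sup_right (Submodule.mem_sup_left (memL _ _))
    have h1 : b i1 ∈ W5 ⊔ W1 := Submodule.mem_sup_right (Submodule.mem_sup_left (memR _ _))
    have h02 : b i0 + b i2 ∈ W5 ⊔ W1 :=
      Submodule.mem_sup_left (Submodule.mem_sup_left (memL _ _))
    have h30 : b i3 - b i0 ∈ W5 ⊔ W1 :=
      Submodule.mem_sup_left (Submodule.mem_sup_left (memR _ _))
    refine htop _ h0 h1 ?_ ?_ (le_sup_of_le_left le_sup_right)
    · simpa using sub_mem h02 h0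
    · simpa using add_mem h30 h0
  -- kernel containments
  have hW1ker : W1 ≤ LinearMap.ker (b.coord i3) := by
    rw [hW1def]
    exact hker _ _ _ (hcne _ _ (by omega)) (hcne _ _ (by omega))
      (fun i hi => hcne _ _ (by omega))
  have hW3ker : W3 ≤ LinearMap.ker (b.coord i3) := by
    rw [hW3def]
    refine hker _ _ _ ?_ ?_ (fun i hi => hcne _ _ (by omega))
    · simp [map_add, hcne _ _ (show i0.1 ≠ i3.1 by omega),
        hcne _ _ (show i2.1 ≠ i3.1 by omega)]
    · simp [map_sub, hcne _ _ (show i1.1 ≠ i3.1 by omega),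
        hcne _ _ (show i2.1 ≠ i3.1 by omega)]
  have hW4ker2 : W4 ≤ LinearMap.ker (b.coord i2) := by
    rw [hW4def]
    exact hker _ _ _ (hcne _ _ (by omega)) (hcne _ _ (by omega))
      (fun i hi => hcne _ _ (by omega))
  have hW1ker2 : W1 ≤ LinearMap.ker (b.coord i2) := by
    rw [hW1def]
    exact hker _ _ _ (hcne _ _ (by omega)) (hcne _ _ (by omega))
      (fun i hi => hcne _ _ (by omega))
  have hW2ker0 : W2 ≤ LinearMap.ker (b.coord i0) := by
    rw [hW2def]
    exact hker _ _ _ (hcne _ _ (by omega)) (hcne _ _ (by omega))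
      (fun i hi => hcne _ _ (by omega))
  have hW4ker0 : W4 ≤ LinearMap.ker (b.coord i0) := by
    rw [hW4def]
    exact hker _ _ _ (hcne _ _ (by omega)) (hcne _ _ (by omega))
      (fun i hi => hcne _ _ (by omega))
  have hW2ker1 : W2 ≤ LinearMap.ker (b.coord i1) := by
    rw [hW2def]
    exact hker _ _ _ (hcne _ _ (by omega)) (hcne _ _ (by omega))
      (fun i hi => hcne _ _ (by omega))
  have hW5ker1 : W5 ≤ LinearMap.ker (b.coord i1) := by
    rw [hW5def]
    refine hker _ _ _ ?_ ?_ (fun i hi => hcne _ _ (by omega))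
    · simp [map_add, hcne _ _ (show i0.1 ≠ i1.1 by omega),
        hcne _ _ (show i2.1 ≠ i1.1 by omega)]
    · simp [map_sub, hcne _ _ (show i3.1 ≠ i1.1 by omega),
        hcne _ _ (show i0.1 ≠ i1.1 by omega)]
  -- the functional for the pair (3,5)
  set ψ : V →ₗ[K] K := b.coord i0 - b.coord i1 - b.coord i2 + b.coord i3 with hψdef
  have hψ3 : W3 ≤ LinearMap.ker ψ := by
    rw [hW3def]
    refine hker _ _ _ ?_ ?_ ?_
    · simp [hψdef, map_add, hceq, hcne _ _ (show i0.1 ≠ i1.1 by omega),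
        hcne _ _ (show i0.1 ≠ i2.1 by omega), hcne _ _ (show i0.1 ≠ i3.1 by omega),
        hcne _ _ (show i2.1 ≠ i0.1 by omega), hcne _ _ (show i2.1 ≠ i1.1 by omega),
        hcne _ _ (show i2.1 ≠ i3.1 by omega)]
    · simp [hψdef, map_sub, hceq, hcne _ _ (show i1.1 ≠ i0.1 by omega),
        hcne _ _ (show i1.1 ≠ i2.1 by omega), hcne _ _ (show i1.1 ≠ i3.1 by omega),
        hcne _ _ (show i2.1 ≠ i0.1 by omega), hcne _ _ (show i2.1 ≠ i1.1 by omega),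
        hcne _ _ (show i2.1 ≠ i3.1 by omega)]
    · intro i hi
      simp [hψdef, hcne _ _ (show i.1 ≠ i0.1 by omega),
        hcne _ _ (show i.1 ≠ i1.1 by omega), hcne _ _ (show i.1 ≠ i2.1 by omega),
        hcne _ _ (show i.1 ≠ i3.1 by omega)]
  have hψ5 : W5 ≤ LinearMap.ker ψ := by
    rw [hW5def]
    refine hker _ _ _ ?_ ?_ ?_
    · simp [hψdef, map_add, hceq, hcne _ _ (show i0.1 ≠ i1.1 by omega),
        hcne _ _ (show i0.1 ≠ i2.1 by omega), hcne _ _ (show i0.1 ≠ i3.1 by omega),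
        hcne _ _ (show i2.1 ≠ i0.1 by omega), hcne _ _ (show i2.1 ≠ i1.1 by omega),
        hcne _ _ (show i2.1 ≠ i3.1 by omega)]
    · simp [hψdef, map_sub, hceq, hcne _ _ (show i3.1 ≠ i0.1 by omega),
        hcne _ _ (show i3.1 ≠ i1.1 by omega), hcne _ _ (show i3.1 ≠ i2.1 by omega),
        hcne _ _ (show i0.1 ≠ i1.1 by omega), hcne _ _ (show i0.1 ≠ i2.1 by omega),
        hcne _ _ (show i0.1 ≠ i3.1 by omega)]
    · intro i hi
      simp [hψdef, hcne _ _ (show i.1 ≠ i0.1 by omega),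
        hcne _ _ (show i.1 ≠ i1.1 by omega), hcne _ _ (show i.1 ≠ i2.1 by omega),
        hcne _ _ (show i.1 ≠ i3.1 by omega)]
  have hψ0 : ψ (b i0) = 1 := by
    simp [hψdef, hceq, hcne _ _ (show i0.1 ≠ i1.1 by omega),
      hcne _ _ (show i0.1 ≠ i2.1 by omega), hcne _ _ (show i0.1 ≠ i3.1 by omega)]
  -- non-sups
  have h13 : W1 ⊔ W3 ≠ ⊤ :=
    hne_top (b.coord i3) i3 _ (sup_le hW1ker hW3ker) (hceq i3)
  have h14 : W1 ⊔ W4 ≠ ⊤ :=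
    hne_top (b.coord i2) i2 _ (sup_le hW1ker2 hW4ker2) (hceq i2)
  have h24 : W2 ⊔ W4 ≠ ⊤ :=
    hne_top (b.coord i0) i0 _ (sup_le hW2ker0 hW4ker0) (hceq i0)
  have h25 : W2 ⊔ W5 ≠ ⊤ :=
    hne_top (b.coord i1) i1 _ (sup_le hW2ker1 hW5ker1) (hceq i1)
  have h35 : W3 ⊔ W5 ≠ ⊤ :=
    hne_top ψ i0 _ (sup_le hψ3 hψ5) hψ0
  -- properness
  have hW1top : W1 ≠ ⊤ := hne_top _ i3 _ hW1ker (hceq i3)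
  have hW2top : W2 ≠ ⊤ := hne_top _ i0 _ hW2ker0 (hceq i0)
  have hW3top : W3 ≠ ⊤ := hne_top _ i3 _ hW3ker (hceq i3)
  have hW4top : W4 ≠ ⊤ := hne_top _ i2 _ hW4ker2 (hceq i2)
  have hW5top : W5 ≠ ⊤ := hne_top _ i1 _ hW5ker1 (hceq i1)
  -- nontriviality
  have hW1bot : W1 ≠ ⊥ := by
    intro h
    have : b i0 ∈ W1 := Submodule.mem_sup_left (memL _ _)
    rw [h, Submodule.mem_bot] at this
    exact b.ne_zero i0 this
  have hW2bot : W2 ≠ ⊥ := by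
    intro h
    have : b i2 ∈ W2 := Submodule.mem_sup_left (memL _ _)
    rw [h, Submodule.mem_bot] at this
    exact b.ne_zero i2 this
  have hW4bot : W4 ≠ ⊥ := by
    intro h
    have : b i1 ∈ W4 := Submodule.mem_sup_left (memL _ _)
    rw [h, Submodule.mem_bot] at this
    exact b.ne_zero i1 this
  have hb02 : b i0 + b i2 ≠ 0 := by
    intro h
    have := congrArg (b.coord i0) h
    rw [map_add, hceq, hcne _ _ (show i2.1 ≠ i0.1 by omega), map_zero] at this
    simpa using this
  have hW3bot : W3 ≠ ⊥ := by
    intro h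
    have : b i0 + b i2 ∈ W3 := Submodule.mem_sup_left (memL _ _)
    rw [h, Submodule.mem_bot] at this
    exact hb02 this
  have hW5bot : W5 ≠ ⊥ := by
    intro h
    have : b i0 + b i2 ∈ W5 := Submodule.mem_sup_left (memL _ _)
    rw [h, Submodule.mem_bot] at this
    exact hb02 this
  -- distinctness
  have hne12 : W1 ≠ W2 := by
    intro h; apply hW2top; rw [← hsup12, h, sup_idem]
  have hne23 : W2 ≠ W3 := by
    intro h; apply hW3top; rw [← hsup23, h, sup_idem]
  have hne34 : W3 ≠ W4 := by
    intro h; apply hW4top; rw [← hsup34, h, sup_idem]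
  have hne45 : W4 ≠ W5 := by
    intro h; apply hW5top; rw [← hsup45, h, sup_idem]
  have hne15 : W1 ≠ W5 := by
    intro h; apply hW1top; rw [← hsup51, h, sup_idem]
  have hne13 : W1 ≠ W3 := by
    intro h; apply h14; rw [h]; exact hsup34
  have hne14 : W1 ≠ W4 := by
    intro h; apply h13; rw [h, sup_comm]; exact hsup34
  have hne24 : W2 ≠ W4 := by
    intro h; apply h14; rw [← h]; exact hsup12
  have hne25 : W2 ≠ W5 := by
    intro h; apply h35; rw [← h, sup_comm]; exact hsup23
  have hne35 : W3 ≠ W5 := by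
    intro h; apply h25; rw [← h]; exact hsup23
  clear_value ψ W1 W2 W3 W4 W5 R b
  refine ⟨⟨W1, W2, W3, W4, W5, ⟨hW1bot, hW1top⟩, ⟨hW2bot, hW2top⟩, ⟨hW3bot, hW3top⟩,
    ⟨hW4bot, hW4top⟩, ⟨hW5bot, hW5top⟩, hne12, hne13, hne14, hne15, hne23, hne24,
    hne25, hne34, hne35, hne45, hsup12, hsup23, hsup34, hsup45, hsup51,
    h13, h14, h24, h25, h35⟩, ?_⟩
  -- non-perfection
  intro hperf
  set G := subspaceSumGraph K V with hGdef
  set v1 : {W : Submodule K V // W ≠ ⊥ ∧ W ≠ ⊤} := ⟨W1, hW1bot, hW1top⟩ with hv1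
  set v2 : {W : Submodule K V // W ≠ ⊥ ∧ W ≠ ⊤} := ⟨W2, hW2bot, hW2top⟩ with hv2
  set v3 : {W : Submodule K V // W ≠ ⊥ ∧ W ≠ ⊤} := ⟨W3, hW3bot, hW3top⟩ with hv3
  set v4 : {W : Submodule K V // W ≠ ⊥ ∧ W ≠ ⊤} := ⟨W4, hW4bot, hW4top⟩ with hv4
  set v5 : {W : Submodule K V // W ≠ ⊥ ∧ W ≠ ⊤} := ⟨W5, hW5bot, hW5top⟩ with hv5
  set s : Set {W : Submodule K V // W ≠ ⊥ ∧ W ≠ ⊤} := {v1, v2, v3, v4, v5} with hsdef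
  have hvne : ∀ (a c : {W : Submodule K V // W ≠ ⊥ ∧ W ≠ ⊤}),
      (a : Submodule K V) ≠ c → a ≠ c := fun a c h hc => h (congrArg Subtype.val hc)
  -- symmetric versions of non-sups
  have h31 : W3 ⊔ W1 ≠ ⊤ := by rw [sup_comm]; exact h13
  have h41 : W4 ⊔ W1 ≠ ⊤ := by rw [sup_comm]; exact h14
  have h42 : W4 ⊔ W2 ≠ ⊤ := by rw [sup_comm]; exact h24
  have h52 : W5 ⊔ W2 ≠ ⊤ := by rw [sup_comm]; exact h25
  have h53 : W5 ⊔ W3 ≠ ⊤ := by rw [sup_comm]; exact h35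
  -- no triangles among v1..v5
  have tri : ∀ x y z : {W : Submodule K V // W ≠ ⊥ ∧ W ≠ ⊤},
      x ∈ s → y ∈ s → z ∈ s → G.Adj x y → G.Adj x z → G.Adj y z → False := by
    intro x y z hx hy hz hxy hxz hyz
    simp only [hsdef, Set.mem_insert_iff, Set.mem_singleton_iff] at hx hy hz
    rcases hx with rfl | rfl | rfl | rfl | rfl <;>
      rcases hy with rfl | rfl | rfl | rfl | rfl <;>
        rcases hz with rfl | rfl | rfl | rfl | rfl <;>
          first
            | exact hxy.1 rfl
            | exact hxz.1 rfl
            | exact hyz.1 rfl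
            | exact h13 hxy.2 | exact h13 hxz.2 | exact h13 hyz.2
            | exact h14 hxy.2 | exact h14 hxz.2 | exact h14 hyz.2
            | exact h24 hxy.2 | exact h24 hxz.2 | exact h24 hyz.2
            | exact h25 hxy.2 | exact h25 hxz.2 | exact h25 hyz.2
            | exact h35 hxy.2 | exact h35 hxz.2 | exact h35 hyz.2
            | exact h31 hxy.2 | exact h31 hxz.2 | exact h31 hyz.2
            | exact h41 hxy.2 | exact h41 hxz.2 | exact h41 hyz.2
            | exact h42 hxy.2 | exact h42 hxz.2 | exact h42 hyz.2
            | exact h52 hxy.2 | exact h52 hxz.2 | exact h52 hyz.2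
            | exact h53 hxy.2 | exact h53 hxz.2 | exact h53 hyz.2
  -- clique number at most 2
  have hclique : cliqueNumE (G.induce s) ≤ 2 := by
    apply sSup_le
    rintro x ⟨m, ⟨t, hcl⟩, rfl⟩
    by_contra hm
    push_neg at hm
    have hm' : 2 < m := by exact_mod_cast hm
    rw [← hcl.card_eq] at hm'
    obtain ⟨a, c, d, ha, hc, hd, hac, had, hcd⟩ := Finset.two_lt_card_iff.mp hm'
    have Hac : (G.induce s).Adj a c := hcl.isClique (Finset.mem_coe.mpr ha)
      (Finset.mem_coe.mpr hc) hac
    have Had : (G.induce s).Adj a d := hcl.isClique (Finset.mem_coe.mpr ha)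
      (Finset.mem_coe.mpr hd) had
    have Hcd : (G.induce s).Adj c d := hcl.isClique (Finset.mem_coe.mpr hc)
      (Finset.mem_coe.mpr hd) hcd
    exact tri a.1 c.1 d.1 a.2 c.2 d.2 Hac Had Hcd
  -- not 2-colorable
  have hu1 : v1 ∈ s := by simp [hsdef]
  have hu2 : v2 ∈ s := by simp [hsdef]
  have hu3 : v3 ∈ s := by simp [hsdef]
  have hu4 : v4 ∈ s := by simp [hsdef]
  have hu5 : v5 ∈ s := by simp [hsdef]
  have hnc : ¬ (G.induce s).Colorable 2 := by
    rintro ⟨C⟩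
    have a12 : (G.induce s).Adj ⟨v1, hu1⟩ ⟨v2, hu2⟩ := ⟨hvne _ _ hne12, hsup12⟩
    have a23 : (G.induce s).Adj ⟨v2, hu2⟩ ⟨v3, hu3⟩ := ⟨hvne _ _ hne23, hsup23⟩
    have a34 : (G.induce s).Adj ⟨v3, hu3⟩ ⟨v4, hu4⟩ := ⟨hvne _ _ hne34, hsup34⟩
    have a45 : (G.induce s).Adj ⟨v4, hu4⟩ ⟨v5, hu5⟩ := ⟨hvne _ _ hne45, hsup45⟩
    have a51 : (G.induce s).Adj ⟨v5, hu5⟩ ⟨v1, hu1⟩ := ⟨hvne _ _ (Ne.symm hne15), hsup51⟩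
    have e12 := C.valid a12
    have e23 := C.valid a23
    have e34 := C.valid a34
    have e45 := C.valid a45
    have e51 := C.valid a51
    have l1 := (C ⟨v1, hu1⟩).isLt
    have l2 := (C ⟨v2, hu2⟩).isLt
    have l3 := (C ⟨v3, hu3⟩).isLt
    have l4 := (C ⟨v4, hu4⟩).isLt
    have l5 := (C ⟨v5, hu5⟩).isLt
    have n12 : (C ⟨v1, hu1⟩).1 ≠ (C ⟨v2, hu2⟩).1 := fun h => e12 (Fin.ext h)
    have n23 : (C ⟨v2, hu2⟩).1 ≠ (C ⟨v3, hu3⟩).1 := fun h => e23 (Fin.ext h)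
    have n34 : (C ⟨v3, hu3⟩).1 ≠ (C ⟨v4, hu4⟩).1 := fun h => e34 (Fin.ext h)
    have n45 : (C ⟨v4, hu4⟩).1 ≠ (C ⟨v5, hu5⟩).1 := fun h => e45 (Fin.ext h)
    have n51 : (C ⟨v5, hu5⟩).1 ≠ (C ⟨v1, hu1⟩).1 := fun h => e51 (Fin.ext h)
    omega
  have hchrom : 3 ≤ (G.induce s).chromaticNumber := by
    have h2 : ¬ (G.induce s).chromaticNumber ≤ (2 : ℕ) :=
      fun h => hnc (SimpleGraph.chromaticNumber_le_iff_colorable.mp h)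
    have := not_le.mp h2
    calc (3 : ℕ∞) = (2 : ℕ) + 1 := by norm_num
    _ ≤ (G.induce s).chromaticNumber := Order.add_one_le_of_lt this
  have := hperf s
  rw [this] at hchrom
  have : (3 : ℕ∞) ≤ 2 := le_trans hchrom hclique
  norm_num at this
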